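/- For every p in (0,1] there exists a constant C > 0 such that for all distinct real x, y with |x - y| \le 1/2, one has |S_p(x) - S_p(y)| \le C |x - y|^p \log_2(1/|x - y|). In particular one may take C = (1/p)\log_2(p \ln 2/(2^p - 1)) + 2^p/(p \ln 2) + 1. -/

import Mathlib

open Real

noncomputable def T0 (x : ℝ) : ℝ := |x - round x|

noncomputable def S (p x : ℝ) : ℝ := ∑' n : ℕ, (T0 (2 ^ n * x) / 2 ^ n) ^ p

lemma T0_nonneg (x : ℝ) : 0 ≤ T0 x := abs_nonneg _

lemma T0_le_half (x : ℝ) : T0 x ≤ 1 / 2 := abs_sub_round x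

lemma T0_lip (u v : ℝ) : |T0 u - T0 v| ≤ |u - v| := by
  have key : ∀ a b : ℝ, T0 a - T0 b ≤ |a - b| := by
    intro a b
    have h1 : T0 a ≤ |a - (round b : ℤ)| := round_le a (round b)
    have h2 : |a - (round b : ℤ)| ≤ |a - b| + |b - round b| := by
      have : a - (round b : ℤ) = (a - b) + (b - round b) := by ring
      rw [this]; exact abs_add_le _ _
    simp only [T0] at *
    linarith
  rw [abs_sub_le_iff]
  constructor
  · exact key u v
  · rw [abs_sub_comm]; exact key v u

lemma rpow_add_le (p : ℝ) (hp0 : 0 ≤ p) (hp1 : p ≤ 1) {a b : ℝ} (ha : 0 ≤ a) (hb : 0 ≤ b) :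
    (a + b) ^ p ≤ a ^ p + b ^ p := by
  have h := NNReal.rpow_add_le_add_rpow a.toNNReal b.toNNReal hp0 hp1
  have := (NNReal.coe_le_coe).2 h
  push_cast [NNReal.coe_rpow, Real.coe_toNNReal _ ha, Real.coe_toNNReal _ hb] at this
  exact this

lemma abs_rpow_sub (p : ℝ) (hp0 : 0 < p) (hp1 : p ≤ 1) {a b : ℝ} (ha : 0 ≤ a) (hb : 0 ≤ b) :
    |a ^ p - b ^ p| ≤ |a - b| ^ p := by
  wlog hba : b ≤ a generalizing a b
  · rw [abs_sub_comm, abs_sub_comm a b]; exact this hb ha (le_of_not_ge hba)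
  have h1 : b ^ p ≤ a ^ p := Real.rpow_le_rpow hb hba hp0.le
  rw [abs_of_nonneg (sub_nonneg.2 h1), abs_of_nonneg (sub_nonneg.2 hba)]
  have h2 : a ^ p ≤ (a - b) ^ p + b ^ p := by
    have := rpow_add_le p hp0.le hp1 (sub_nonneg.2 hba) hb
    rwa [sub_add_cancel] at this
  linarith

theorem stmt_9 (p : ℝ) (hp0 : 0 < p) (hp1 : p ≤ 1) :
    ∃ C : ℝ, 0 < C ∧
      C = 1 / p * Real.logb 2 (p * Real.log 2 / (2 ^ p - 1)) + 2 ^ p / (p * Real.log 2) + 1 ∧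
      ∀ x y : ℝ, x ≠ y → |x - y| ≤ 1 / 2 →
        |S p x - S p y| ≤ C * |x - y| ^ p * Real.logb 2 (1 / |x - y|) := by
  have hlog2 : 0 < Real.log 2 := Real.log_pos one_lt_two
  set t := p * Real.log 2 with ht_def
  have ht : 0 < t := mul_pos hp0 hlog2
  have ht1 : t < 1 := by
    have h1 : t ≤ Real.log 2 := by rw [ht_def]; nlinarith
    nlinarith [Real.log_two_lt_d9]
  set E := (2 : ℝ) ^ p with hE_def
  have hEpos : 0 < E := Real.rpow_pos_of_pos two_pos p
  have hE_exp : E = Real.exp t := by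
    rw [hE_def, ht_def, Real.rpow_def_of_pos two_pos, mul_comm]
  have hE1 : 1 + t ≤ E := by rw [hE_exp]; linarith [Real.add_one_le_exp t]
  have hEm1 : 0 < E - 1 := by linarith
  set A := 1 / p * Real.logb 2 (t / (E - 1)) with hA_def
  have hratio : 0 < t / (E - 1) := div_pos ht hEm1
  have hA_eq : A = Real.log (t / (E - 1)) / t := by
    rw [hA_def, Real.logb, ht_def]
    field_simp
  -- A ≥ -1
  have hA_ge : -1 ≤ A := by
    have h1 : Real.exp (-t) ≤ t / (E - 1) := by
      rw [le_div_iff₀ hEm1, hE_exp]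
      have h2 := Real.add_one_le_exp (-t)
      have h3 : 0 < Real.exp (-t) := Real.exp_pos _
      have h4 : Real.exp (-t) * Real.exp t = 1 := by rw [← Real.exp_add]; simp
      nlinarith
    have h5 : -t ≤ Real.log (t / (E - 1)) :=
      calc -t = Real.log (Real.exp (-t)) := (Real.log_exp _).symm
        _ ≤ Real.log (t / (E - 1)) := Real.log_le_log (Real.exp_pos _) h1
    rw [hA_eq, le_div_iff₀ ht]
    linarith
  have hEt : 1 + 1 / t ≤ E / t := by
    have h1 : (1 + t) / t ≤ E / t := (div_le_div_iff_of_pos_right ht).2 hE1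
    have h2 : (1 + t) / t = 1 / t + 1 := by field_simp
    linarith
  have hinvt : 1 < 1 / t := by rw [lt_div_iff₀ ht]; linarith
  have hAE : 0 ≤ A + E / t := by linarith
  refine ⟨A + E / t + 1, by linarith, rfl, ?_⟩
  intro x y hxy hhalf
  set h := |x - y| with hh_def
  have hh0 : 0 < h := abs_pos.2 (sub_ne_zero.2 hxy)
  set L := Real.logb 2 (1 / h) with hL_def
  have hL1 : 1 ≤ L := by
    rw [hL_def, Real.le_logb_iff_rpow_le one_lt_two (by positivity), Real.rpow_one,
      le_div_iff₀ hh0]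
    linarith
  have hNs : 0 ≤ L + A := by linarith
  set N := ⌈L + A⌉₊ with hN_def
  have hN_ge : L + A ≤ (N : ℝ) := Nat.le_ceil _
  have hN_lt : (N : ℝ) < L + A + 1 := Nat.ceil_lt_add_one hNs
  set q := (2 : ℝ) ^ (-p) with hq_def
  have hq0 : 0 < q := Real.rpow_pos_of_pos two_pos _
  have hq1 : q < 1 := Real.rpow_lt_one_of_one_lt_of_neg one_lt_two (neg_neg_of_pos hp0)
  have hqE : q = E⁻¹ := by rw [hq_def, hE_def, Real.rpow_neg two_pos.le]
  have pow2pos : ∀ n : ℕ, (0 : ℝ) < 2 ^ n := fun n => by positivity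
  have term_nonneg : ∀ z : ℝ, ∀ n : ℕ, 0 ≤ (T0 (2 ^ n * z) / 2 ^ n) ^ p := fun z n =>
    Real.rpow_nonneg (div_nonneg (T0_nonneg _) (pow2pos n).le) p
  have qpow : ∀ m : ℕ, q ^ m = (2 : ℝ) ^ (-p * (m : ℝ)) := by
    intro m
    rw [hq_def, ← Real.rpow_natCast ((2 : ℝ) ^ (-p)) m, ← Real.rpow_mul two_pos.le]
  have term_le : ∀ z : ℝ, ∀ n : ℕ, (T0 (2 ^ n * z) / 2 ^ n) ^ p ≤ q ^ (n + 1) := by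
    intro z n
    have h1 : T0 (2 ^ n * z) / 2 ^ n ≤ ((2 : ℝ) ^ (n + 1))⁻¹ := by
      rw [div_le_iff₀ (pow2pos n)]
      have he : ((2 : ℝ) ^ (n + 1))⁻¹ * 2 ^ n = 1 / 2 := by
        rw [pow_succ]; field_simp
      rw [he]; exact T0_le_half _
    have h2 : (T0 (2 ^ n * z) / 2 ^ n) ^ p ≤ (((2 : ℝ) ^ (n + 1))⁻¹) ^ p :=
      Real.rpow_le_rpow (div_nonneg (T0_nonneg _) (pow2pos n).le) h1 hp0.le
    refine h2.trans_eq ?_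
    rw [qpow (n + 1), ← Real.rpow_natCast (2 : ℝ) (n + 1), ← Real.rpow_neg two_pos.le,
      ← Real.rpow_mul two_pos.le]
    congr 1
    push_cast
    ring
  have hgeo : Summable (fun n : ℕ => q ^ (n + 1)) := by
    refine ((summable_geometric_of_lt_one hq0.le hq1).mul_left q).congr (fun n => ?_)
    rw [pow_succ, mul_comm]
  have hsum : ∀ z : ℝ, Summable (fun n : ℕ => (T0 (2 ^ n * z) / 2 ^ n) ^ p) := fun z =>
    Summable.of_nonneg_of_le (term_nonneg z) (term_le z) hgeo
  set d : ℕ → ℝ := fun n => |(T0 (2 ^ n * x) / 2 ^ n) ^ p - (T0 (2 ^ n * y) / 2 ^ n) ^ p|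
    with hd_def
  have hd_le_tail : ∀ n, d n ≤ q ^ (n + 1) := by
    intro n
    rw [hd_def]
    simp only
    rw [abs_sub_le_iff]
    constructor
    · linarith [term_le x n, term_nonneg y n]
    · linarith [term_le y n, term_nonneg x n]
  have hd_le_head : ∀ n, d n ≤ h ^ p := by
    intro n
    have lip : |T0 (2 ^ n * x) / 2 ^ n - T0 (2 ^ n * y) / 2 ^ n| ≤ h := by
      rw [div_sub_div_same, abs_div, abs_of_pos (pow2pos n), div_le_iff₀ (pow2pos n)]
      calc |T0 (2 ^ n * x) - T0 (2 ^ n * y)| ≤ |2 ^ n * x - 2 ^ n * y| := T0_lip _ _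
        _ = 2 ^ n * h := by rw [← mul_sub, abs_mul, abs_of_pos (pow2pos n), hh_def]
        _ = h * 2 ^ n := mul_comm _ _
    calc d n ≤ |T0 (2 ^ n * x) / 2 ^ n - T0 (2 ^ n * y) / 2 ^ n| ^ p :=
          abs_rpow_sub p hp0 hp1 (div_nonneg (T0_nonneg _) (pow2pos n).le)
            (div_nonneg (T0_nonneg _) (pow2pos n).le)
      _ ≤ h ^ p := Real.rpow_le_rpow (abs_nonneg _) lip hp0.le
  have hd_sum : Summable d :=
    Summable.of_nonneg_of_le (fun n => abs_nonneg _) hd_le_tail hgeo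
  have habs : |S p x - S p y| ≤ ∑' n, d n := by
    rw [S, S, ← Summable.tsum_sub (hsum x) (hsum y)]
    have h1 := norm_tsum_le_tsum_norm
      (f := fun n : ℕ => (T0 (2 ^ n * x) / 2 ^ n) ^ p - (T0 (2 ^ n * y) / 2 ^ n) ^ p)
      (by simpa [Real.norm_eq_abs] using hd_sum)
    simpa [Real.norm_eq_abs] using h1
  have hsplit : ∑' n, d n = ∑ i ∈ Finset.range N, d i + ∑' i, d (i + N) :=
    (Summable.sum_add_tsum_nat_add N hd_sum).symm
  have hhead : ∑ i ∈ Finset.range N, d i ≤ (N : ℝ) * h ^ p := by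
    calc ∑ i ∈ Finset.range N, d i ≤ ∑ _i ∈ Finset.range N, h ^ p :=
          Finset.sum_le_sum (fun i _ => hd_le_head i)
      _ = (N : ℝ) * h ^ p := by rw [Finset.sum_const, Finset.card_range, nsmul_eq_mul]
  have htail : ∑' i, d (i + N) ≤ q ^ (N + 1) * (1 - q)⁻¹ := by
    have hb : ∀ i, d (i + N) ≤ q ^ (N + 1) * q ^ i := by
      intro i
      refine (hd_le_tail (i + N)).trans_eq ?_
      rw [← pow_add]
      congr 1
      omega
    calc ∑' i, d (i + N) ≤ ∑' i, q ^ (N + 1) * q ^ i :=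
          Summable.tsum_le_tsum hb ((summable_nat_add_iff N).2 hd_sum)
            ((summable_geometric_of_lt_one hq0.le hq1).mul_left _)
      _ = q ^ (N + 1) * (1 - q)⁻¹ := by
          rw [tsum_mul_left, tsum_geometric_of_lt_one hq0.le hq1]
  have master : |S p x - S p y| ≤ (N : ℝ) * h ^ p + q ^ (N + 1) * (1 - q)⁻¹ := by
    rw [hsplit] at habs
    linarith
  have hhp : 0 < h ^ p := Real.rpow_pos_of_pos hh0 p
  -- tail evaluation
  have e2 : (1 - q)⁻¹ = E / (E - 1) := by
    have haux : (1 : ℝ) - q = (E - 1) / E := by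
      rw [hqE]; field_simp
    rw [haux, inv_div]
  have c1 : (2 : ℝ) ^ (-p * L) = h ^ p := by
    have h2L : (2 : ℝ) ^ L = 1 / h := Real.rpow_logb two_pos (by norm_num) (by positivity)
    rw [mul_comm, Real.rpow_mul two_pos.le, h2L, one_div,
      Real.rpow_neg (inv_nonneg.2 hh0.le), Real.inv_rpow hh0.le, inv_inv]
  have c2 : (2 : ℝ) ^ (p * A) = t / (E - 1) := by
    have hpa : p * A = Real.logb 2 (t / (E - 1)) := by rw [hA_def]; field_simp
    rw [hpa]
    exact Real.rpow_logb two_pos (by norm_num) hratio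
  have c2' : (2 : ℝ) ^ (-(p * A)) = (E - 1) / t := by
    rw [Real.rpow_neg two_pos.le, c2, inv_div]
  have c3 : (2 : ℝ) ^ (-p * (L + A + 1)) = h ^ p * ((E - 1) / t) * E⁻¹ := by
    rw [show -p * (L + A + 1) = -p * L + -(p * A) + -p by ring, Real.rpow_add two_pos,
      Real.rpow_add two_pos, c1, c2', ← hq_def, hqE]
  have c4 : q ^ (N + 1) ≤ (2 : ℝ) ^ (-p * (L + A + 1)) := by
    rw [qpow (N + 1)]
    apply (Real.rpow_le_rpow_left_iff one_lt_two).2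
    have h1 : L + A + 1 ≤ ((N : ℝ) + 1) := by linarith
    push_cast
    exact mul_le_mul_of_nonpos_left h1 (by linarith)
  have hq_pow : q ^ (N + 1) * (1 - q)⁻¹ ≤ h ^ p / t := by
    calc q ^ (N + 1) * (1 - q)⁻¹ ≤ (2 : ℝ) ^ (-p * (L + A + 1)) * (E / (E - 1)) := by
          rw [e2]; exact mul_le_mul_of_nonneg_right c4 (by positivity)
      _ = h ^ p / t := by rw [c3]; field_simp
  -- final arithmetic
  have key : (N : ℝ) + 1 / t ≤ (A + E / t + 1) * L := by
    have h1 : 0 ≤ (A + E / t) * (L - 1) := mul_nonneg hAE (by linarith)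
    have expand : (A + E / t + 1) * L = (A + E / t) * (L - 1) + (A + E / t) + L := by ring
    rw [expand]
    linarith
  have final : (N : ℝ) * h ^ p + h ^ p / t ≤ (A + E / t + 1) * h ^ p * L := by
    calc (N : ℝ) * h ^ p + h ^ p / t = ((N : ℝ) + 1 / t) * h ^ p := by ring
      _ ≤ ((A + E / t + 1) * L) * h ^ p := mul_le_mul_of_nonneg_right key hhp.le
      _ = (A + E / t + 1) * h ^ p * L := by ring
  have step : (N : ℝ) * h ^ p + q ^ (N + 1) * (1 - q)⁻¹ ≤ (N : ℝ) * h ^ p + h ^ p / t :=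
    add_le_add_right hq_pow _
  exact master.trans (step.trans final)
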